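/- Let M be a nonzero real d×e matrix, and let x, y be independent d-dimensional random vectors with i.i.d. standard normal coordinates. Then the Pearson correlation coefficient between ⟨x,y⟩ and xᵀ (M Mᵀ) y is strictly positive. -/

import Mathlib

open MeasureTheory ProbabilityTheory Real
open scoped NNReal ENNReal

namespace PearsonAux

lemma exp_half_eq (x : ℝ) : Real.exp (-x^2/2) = Real.exp (-(2⁻¹ : ℝ) * x^2) := by ring_nf

lemma integrable_exp_half : Integrable (fun x : ℝ => Real.exp (-x^2/2)) := by
  simp_rw [exp_half_eq]
  exact integrable_exp_neg_mul_sq (by norm_num)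

lemma integrable_mul_exp_half : Integrable (fun x : ℝ => x * Real.exp (-x^2/2)) := by
  simp_rw [exp_half_eq]
  exact integrable_mul_exp_neg_mul_sq (by norm_num)

lemma integrable_sq_mul_exp_half : Integrable (fun x : ℝ => x^2 * Real.exp (-x^2/2)) := by
  have h := integrable_rpow_mul_exp_neg_mul_sq (b := 2⁻¹) (by norm_num) (s := 2) (by norm_num)
  simp_rw [exp_half_eq]
  convert h using 2 with x
  rw [show ((2:ℝ)) = ((2:ℕ):ℝ) by norm_num, Real.rpow_natCast]

lemma integral_mul_exp_half : ∫ x : ℝ, x * Real.exp (-x^2/2) = 0 := by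
  have h : ∫ x : ℝ, (fun y : ℝ => y * Real.exp (-y^2/2)) (-x) = ∫ x : ℝ, x * Real.exp (-x^2/2) :=
    integral_neg_eq_self (fun y : ℝ => y * Real.exp (-y^2/2)) volume
  have h' : (fun x : ℝ => (fun y : ℝ => y * Real.exp (-y^2/2)) (-x))
      = fun x : ℝ => -(x * Real.exp (-x^2/2)) := by
    ext x; simp only [neg_sq, neg_mul]
  rw [h', integral_neg] at h
  linarith

lemma integral_exp_half : ∫ x : ℝ, Real.exp (-x^2/2) = Real.sqrt (2*π) := by
  simp_rw [exp_half_eq]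
  rw [integral_gaussian]
  congr 1
  rw [div_eq_mul_inv, inv_inv]
  ring

lemma integral_sq_mul_exp_half : ∫ x : ℝ, x^2 * Real.exp (-x^2/2) = Real.sqrt (2*π) := by
  have hu : ∀ x : ℝ, HasDerivAt (fun y : ℝ => y) 1 x := fun x => hasDerivAt_id x
  have hv : ∀ x : ℝ, HasDerivAt (fun y : ℝ => -Real.exp (-y^2/2)) (x * Real.exp (-x^2/2)) x := by
    intro x
    have h1 : HasDerivAt (fun y : ℝ => -y^2/2) (-x) x := by
      have := ((hasDerivAt_pow 2 x).neg).div_const 2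
      simpa using this.congr_deriv (by push_cast; ring)
    have := (h1.exp).neg
    exact this.congr_deriv (by ring)
  have key := integral_mul_deriv_eq_deriv_mul_of_integrable (fun x _ => hu x) (fun x _ => hv x)
    ?_ ?_ ?_
  · calc ∫ x : ℝ, x^2 * Real.exp (-x^2/2)
        = ∫ x : ℝ, x * (x * Real.exp (-x^2/2)) := by congr 1; ext x; ring
      _ = -∫ x : ℝ, (1:ℝ) * (-Real.exp (-x^2/2)) := key
      _ = ∫ x : ℝ, Real.exp (-x^2/2) := by
          rw [← integral_neg]; congr 1; ext x; ring
      _ = Real.sqrt (2*π) := integral_exp_half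
  · have := integrable_sq_mul_exp_half
    convert this using 1; ext x; simp [sq]; ring
  · have := integrable_exp_half.neg
    convert this using 1; ext x; simp
  · have := integrable_mul_exp_half.neg
    convert this using 1; ext x; simp

noncomputable def stdC : ℝ := (Real.sqrt (2*π))⁻¹

lemma stdC_pos : 0 < stdC := by
  apply inv_pos.mpr
  apply Real.sqrt_pos.mpr
  positivity

lemma gaussian_eq' : gaussianReal 0 1
    = volume.withDensity (fun x => ENNReal.ofReal (stdC * Real.exp (-x^2/2))) := by
  rw [gaussianReal_of_var_ne_zero _ one_ne_zero]
  congr 1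
  ext x
  simp [gaussianPDF, gaussianPDFReal, stdC]

lemma meas_std : Measurable (fun x : ℝ => Real.toNNReal (stdC * Real.exp (-x^2/2))) := by
  apply Measurable.real_toNNReal
  fun_prop

lemma integral_std (f : ℝ → ℝ) : ∫ x, f x ∂(gaussianReal 0 1)
    = ∫ x, (stdC * Real.exp (-x^2/2)) * f x := by
  rw [gaussian_eq']
  rw [show (fun x : ℝ => ENNReal.ofReal (stdC * Real.exp (-x^2/2)))
      = (fun x : ℝ => ((Real.toNNReal (stdC * Real.exp (-x^2/2)) : ℝ≥0) : ℝ≥0∞)) from rfl]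
  rw [integral_withDensity_eq_integral_smul meas_std f]
  congr 1; ext x
  rw [NNReal.smul_def, Real.coe_toNNReal _ (mul_nonneg stdC_pos.le (Real.exp_nonneg _)), smul_eq_mul]

lemma integrable_std (f : ℝ → ℝ) (h : Integrable (fun x => (stdC * Real.exp (-x^2/2)) * f x)) :
    Integrable f (gaussianReal 0 1) := by
  rw [gaussian_eq']
  rw [show (fun x : ℝ => ENNReal.ofReal (stdC * Real.exp (-x^2/2)))
      = (fun x : ℝ => ((Real.toNNReal (stdC * Real.exp (-x^2/2)) : ℝ≥0) : ℝ≥0∞)) from rfl]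
  rw [integrable_withDensity_iff_integrable_smul meas_std]
  convert h using 1
  · rfl
  ext x
  rw [NNReal.smul_def, Real.coe_toNNReal _ (mul_nonneg stdC_pos.le (Real.exp_nonneg _)), smul_eq_mul]

lemma integrable_id_std : Integrable (fun x : ℝ => x) (gaussianReal 0 1) := by
  apply integrable_std
  have := integrable_mul_exp_half.const_mul stdC
  convert this using 1; ext x; ring

lemma integral_id_std : ∫ x, x ∂(gaussianReal 0 1) = 0 := by
  rw [integral_std]
  have : (fun x : ℝ => (stdC * Real.exp (-x^2/2)) * x)
      = fun x : ℝ => stdC * (x * Real.exp (-x^2/2)) := by ext x; ring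
  rw [this, integral_const_mul, integral_mul_exp_half, mul_zero]

lemma integrable_sq_std : Integrable (fun x : ℝ => x * x) (gaussianReal 0 1) := by
  apply integrable_std
  have := integrable_sq_mul_exp_half.const_mul stdC
  convert this using 1; ext x; ring

lemma integral_sq_std : ∫ x, x * x ∂(gaussianReal 0 1) = 1 := by
  rw [integral_std]
  have : (fun x : ℝ => (stdC * Real.exp (-x^2/2)) * (x * x))
      = fun x : ℝ => stdC * (x^2 * Real.exp (-x^2/2)) := by ext x; ring
  rw [this, integral_const_mul, integral_sq_mul_exp_half]
  rw [stdC]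
  apply inv_mul_cancel₀
  positivity

variable {Ω : Type*} [MeasurableSpace Ω] {μ : Measure Ω}

lemma std_integrable {X : Ω → ℝ} (hm : Measurable X) (hg : μ.map X = gaussianReal 0 1) :
    Integrable X μ := by
  have h := integrable_id_std
  rw [← hg] at h
  exact (integrable_map_measure aestronglyMeasurable_id hm.aemeasurable).mp h

lemma std_integral {X : Ω → ℝ} (hm : Measurable X) (hg : μ.map X = gaussianReal 0 1) :
    ∫ ω, X ω ∂μ = 0 := by
  have h := integral_map (μ := μ) (f := fun x : ℝ => x) hm.aemeasurable
    aestronglyMeasurable_id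
  rw [hg, integral_id_std] at h
  exact h.symm

lemma std_integrable_sq {X : Ω → ℝ} (hm : Measurable X) (hg : μ.map X = gaussianReal 0 1) :
    Integrable (fun ω => X ω * X ω) μ := by
  have h := integrable_sq_std
  rw [← hg] at h
  exact (integrable_map_measure ((measurable_id.mul measurable_id).aestronglyMeasurable)
    hm.aemeasurable).mp h

lemma std_integral_sq {X : Ω → ℝ} (hm : Measurable X) (hg : μ.map X = gaussianReal 0 1) :
    ∫ ω, X ω * X ω ∂μ = 1 := by
  have h := integral_map (μ := μ) (f := fun x : ℝ => x * x) hm.aemeasurable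
    ((measurable_id.mul measurable_id).aestronglyMeasurable)
  rw [hg, integral_sq_std] at h
  exact h.symm

end PearsonAux

open PearsonAux

/-- Theorem 1 of the paper: for a nonzero matrix M and independent d-dimensional
random vectors x, y with i.i.d. standard normal coordinates (x_φ = Z (0,φ),
y_φ = Z (1,φ)), the Pearson correlation coefficient between ⟨x,y⟩ and xᵀ (M Mᵀ) y
is strictly positive. -/
theorem pearson_corr_pos_of_nonzero_matrix
    {Ω : Type*} [MeasurableSpace Ω] (μ : Measure Ω) [IsProbabilityMeasure μ]
    (d e : ℕ) (Z : Fin 2 × Fin d → Ω → ℝ) (M : Matrix (Fin d) (Fin e) ℝ)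
    (hM : M ≠ 0)
    (hmeas : ∀ i, Measurable (Z i))
    (hindep : iIndepFun Z μ)
    (hgauss : ∀ i, μ.map (Z i) = gaussianReal 0 1) :
    0 < ((∫ ω, (∑ φ : Fin d, Z (0, φ) ω * Z (1, φ) ω)
            * (∑ ν : Fin d, ∑ ν' : Fin d,
                Z (0, ν) ω * (M * M.transpose) ν ν' * Z (1, ν') ω) ∂μ)
          - (∫ ω, ∑ φ : Fin d, Z (0, φ) ω * Z (1, φ) ω ∂μ)
            * (∫ ω, ∑ ν : Fin d, ∑ ν' : Fin d,
                Z (0, ν) ω * (M * M.transpose) ν ν' * Z (1, ν') ω ∂μ))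
        / Real.sqrt
            (variance (fun ω => ∑ φ : Fin d, Z (0, φ) ω * Z (1, φ) ω) μ
              * variance (fun ω => ∑ ν : Fin d, ∑ ν' : Fin d,
                  Z (0, ν) ω * (M * M.transpose) ν ν' * Z (1, ν') ω) μ) := by
  classical
  set A : Matrix (Fin d) (Fin d) ℝ := M * M.transpose with hA
  -- basic facts about each coordinate
  have hInt1 : ∀ i, Integrable (Z i) μ := fun i => std_integrable (hmeas i) (hgauss i)
  have hE1 : ∀ i, ∫ ω, Z i ω ∂μ = 0 := fun i => std_integral (hmeas i) (hgauss i)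
  have hInt2 : ∀ i, Integrable (fun ω => Z i ω * Z i ω) μ :=
    fun i => std_integrable_sq (hmeas i) (hgauss i)
  have hE2 : ∀ i, ∫ ω, Z i ω * Z i ω ∂μ = 1 := fun i => std_integral_sq (hmeas i) (hgauss i)
  -- index inequalities
  have hne : ∀ (j : Fin 2) (a b : Fin d), a ≠ b → ((j, a) : Fin 2 × Fin d) ≠ (j, b) := by
    intro j a b h hcontra
    exact h (congrArg Prod.snd hcontra)
  have hne01 : ∀ (a c : Fin d), ((0 : Fin 2), a) ≠ ((1 : Fin 2), c) := by
    intro a c hcontra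
    have := congrArg Prod.fst hcontra
    simp at this
  -- products within a block
  have pair_int : ∀ (j : Fin 2) (a b : Fin d),
      Integrable (fun ω => Z (j, a) ω * Z (j, b) ω) μ := by
    intro j a b
    by_cases h : a = b
    · subst h; exact hInt2 _
    · exact ((hindep.indepFun (hne j a b h)).integrable_mul (hInt1 _) (hInt1 _))
  have pair_E : ∀ (j : Fin 2) (a b : Fin d),
      ∫ ω, Z (j, a) ω * Z (j, b) ω ∂μ = if a = b then 1 else 0 := by
    intro j a b
    by_cases h : a = b
    · subst h; rw [if_pos rfl]; exact hE2 _
    · rw [if_neg h]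
      have := (hindep.indepFun (hne j a b h)).integral_mul_eq_mul_integral (hInt1 _).aestronglyMeasurable (hInt1 _).aestronglyMeasurable
      calc ∫ ω, Z (j, a) ω * Z (j, b) ω ∂μ = ∫ ω, (Z (j, a) * Z (j, b)) ω ∂μ := rfl
        _ = (∫ ω, Z (j, a) ω ∂μ) * ∫ ω, Z (j, b) ω ∂μ := this
        _ = 0 := by rw [hE1, hE1, mul_zero]
  -- cross-block independence of pair products
  have crossIndep : ∀ a b c f : Fin d,
      IndepFun (fun ω => Z (0, a) ω * Z (0, b) ω) (fun ω => Z (1, c) ω * Z (1, f) ω) μ := by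
    intro a b c f
    exact hindep.indepFun_mul_mul hmeas (0, a) (0, b) (1, c) (1, f)
      (hne01 a c) (hne01 a f) (hne01 b c) (hne01 b f)
  have cross4_int : ∀ a b c f : Fin d,
      Integrable (fun ω => (Z (0, a) ω * Z (0, b) ω) * (Z (1, c) ω * Z (1, f) ω)) μ := by
    intro a b c f
    exact (crossIndep a b c f).integrable_mul (pair_int 0 a b) (pair_int 1 c f)
  have cross4_E : ∀ a b c f : Fin d,
      ∫ ω, (Z (0, a) ω * Z (0, b) ω) * (Z (1, c) ω * Z (1, f) ω) ∂μ
        = (if a = b then (1:ℝ) else 0) * (if c = f then 1 else 0) := by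
    intro a b c f
    have := (crossIndep a b c f).integral_mul_eq_mul_integral (pair_int 0 a b).aestronglyMeasurable (pair_int 1 c f).aestronglyMeasurable
    calc ∫ ω, (Z (0, a) ω * Z (0, b) ω) * (Z (1, c) ω * Z (1, f) ω) ∂μ
        = (∫ ω, Z (0, a) ω * Z (0, b) ω ∂μ) * ∫ ω, Z (1, c) ω * Z (1, f) ω ∂μ := this
      _ = (if a = b then (1:ℝ) else 0) * (if c = f then 1 else 0) := by
          rw [pair_E, pair_E]
  -- single cross products
  have cross2_int : ∀ a c : Fin d, Integrable (fun ω => Z (0, a) ω * Z (1, c) ω) μ :=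
    fun a c => (hindep.indepFun (hne01 a c)).integrable_mul (hInt1 _) (hInt1 _)
  have cross2_E : ∀ a c : Fin d, ∫ ω, Z (0, a) ω * Z (1, c) ω ∂μ = 0 := by
    intro a c
    have := (hindep.indepFun (hne01 a c)).integral_mul_eq_mul_integral (hInt1 _).aestronglyMeasurable (hInt1 _).aestronglyMeasurable
    calc ∫ ω, Z (0, a) ω * Z (1, c) ω ∂μ = ∫ ω, (Z (0, a) * Z (1, c)) ω ∂μ := rfl
      _ = (∫ ω, Z (0, a) ω ∂μ) * ∫ ω, Z (1, c) ω ∂μ := this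
      _ = 0 := by rw [hE1, hE1, mul_zero]
  -- mean of U
  have hEU : ∫ ω, ∑ φ : Fin d, Z (0, φ) ω * Z (1, φ) ω ∂μ = 0 := by
    rw [integral_finset_sum _ (fun φ _ => cross2_int φ φ)]
    simp [cross2_E]
  -- mean of V
  have hVterm_int : ∀ ν ν' : Fin d,
      Integrable (fun ω => Z (0, ν) ω * A ν ν' * Z (1, ν') ω) μ := by
    intro ν ν'
    have h := (cross2_int ν ν').const_mul (A ν ν')
    convert h using 1
    funext ω; ring
  have hEV : ∫ ω, ∑ ν : Fin d, ∑ ν' : Fin d, Z (0, ν) ω * A ν ν' * Z (1, ν') ω ∂μ = 0 := by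
    rw [integral_finset_sum _ (fun ν _ => integrable_finset_sum _ (fun ν' _ => hVterm_int ν ν'))]
    refine Finset.sum_eq_zero fun ν _ => ?_
    rw [integral_finset_sum _ (fun ν' _ => hVterm_int ν ν')]
    refine Finset.sum_eq_zero fun ν' _ => ?_
    have heq : (fun ω => Z (0, ν) ω * A ν ν' * Z (1, ν') ω)
        = fun ω => A ν ν' * (Z (0, ν) ω * Z (1, ν') ω) := by funext ω; ring
    rw [heq, integral_const_mul, cross2_E, mul_zero]
  -- E[UV]
  have hptw : (fun ω => (∑ φ : Fin d, Z (0, φ) ω * Z (1, φ) ω)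
      * (∑ ν : Fin d, ∑ ν' : Fin d, Z (0, ν) ω * A ν ν' * Z (1, ν') ω))
      = fun ω => ∑ φ : Fin d, ∑ ν : Fin d, ∑ ν' : Fin d,
          A ν ν' * ((Z (0, φ) ω * Z (0, ν) ω) * (Z (1, φ) ω * Z (1, ν') ω)) := by
    funext ω
    rw [Finset.sum_mul]
    refine Finset.sum_congr rfl fun φ _ => ?_
    rw [Finset.mul_sum]
    refine Finset.sum_congr rfl fun ν _ => ?_
    rw [Finset.mul_sum]
    refine Finset.sum_congr rfl fun ν' _ => ?_
    ring
  have hEUV : ∫ ω, (∑ φ : Fin d, Z (0, φ) ω * Z (1, φ) ω)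
      * (∑ ν : Fin d, ∑ ν' : Fin d, Z (0, ν) ω * A ν ν' * Z (1, ν') ω) ∂μ
      = ∑ φ : Fin d, A φ φ := by
    rw [hptw]
    rw [integral_finset_sum _ (fun φ _ => integrable_finset_sum _ (fun ν _ =>
      integrable_finset_sum _ (fun ν' _ => (cross4_int φ ν φ ν').const_mul (A ν ν'))))]
    have : ∀ φ : Fin d, (∫ ω, ∑ ν : Fin d, ∑ ν' : Fin d,
        A ν ν' * ((Z (0, φ) ω * Z (0, ν) ω) * (Z (1, φ) ω * Z (1, ν') ω)) ∂μ) = A φ φ := by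
      intro φ
      rw [integral_finset_sum _ (fun ν _ =>
        integrable_finset_sum _ (fun ν' _ => (cross4_int φ ν φ ν').const_mul (A ν ν')))]
      have hInner : ∀ ν : Fin d, (∫ ω, ∑ ν' : Fin d,
          A ν ν' * ((Z (0, φ) ω * Z (0, ν) ω) * (Z (1, φ) ω * Z (1, ν') ω)) ∂μ)
          = if φ = ν then A ν φ else 0 := by
        intro ν
        rw [integral_finset_sum _ (fun ν' _ => (cross4_int φ ν φ ν').const_mul (A ν ν'))]
        have : ∀ ν' : Fin d, (∫ ω, A ν ν'
            * ((Z (0, φ) ω * Z (0, ν) ω) * (Z (1, φ) ω * Z (1, ν') ω)) ∂μ)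
            = A ν ν' * ((if φ = ν then (1:ℝ) else 0) * (if φ = ν' then 1 else 0)) := by
          intro ν'
          rw [integral_const_mul, cross4_E]
        rw [Finset.sum_congr rfl fun ν' _ => this ν']
        by_cases h : φ = ν
        · subst h
          simp [mul_ite]
        · simp [h]
      rw [Finset.sum_congr rfl fun ν _ => hInner ν]
      simp
    rw [Finset.sum_congr rfl fun φ _ => this φ]
  -- MemLp facts
  have memℒp_prod : ∀ a c : Fin d, MemLp (fun ω => Z (0, a) ω * Z (1, c) ω) 2 μ := by
    intro a c
    rw [memLp_two_iff_integrable_sq (f := fun ω => Z (0, a) ω * Z (1, c) ω)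
      (((hmeas _).mul (hmeas _)).aestronglyMeasurable)]
    have h := cross4_int a a c c
    convert h using 1
    funext ω; ring
  have memU : MemLp (fun ω => ∑ φ : Fin d, Z (0, φ) ω * Z (1, φ) ω) 2 μ := by
    have h := memLp_finset_sum' (μ := μ) (p := 2) Finset.univ
      (f := fun (φ : Fin d) => fun ω => Z (0, φ) ω * Z (1, φ) ω)
      (fun φ _ => memℒp_prod φ φ)
    have heq : (∑ φ : Fin d, fun ω => Z (0, φ) ω * Z (1, φ) ω)
        = fun ω => ∑ φ : Fin d, Z (0, φ) ω * Z (1, φ) ω := by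
      funext ω; rw [Finset.sum_apply]
    rwa [heq] at h
  have memV : MemLp (fun ω => ∑ ν : Fin d, ∑ ν' : Fin d,
      Z (0, ν) ω * A ν ν' * Z (1, ν') ω) 2 μ := by
    have h := memLp_finset_sum' (μ := μ) (p := 2) (Finset.univ ×ˢ Finset.univ)
      (f := fun (p : Fin d × Fin d) => fun ω => Z (0, p.1) ω * A p.1 p.2 * Z (1, p.2) ω)
      (fun p _ => by
        show MemLp (fun ω => Z (0, p.1) ω * A p.1 p.2 * Z (1, p.2) ω) 2 μ
        have heq : (fun ω => Z (0, p.1) ω * A p.1 p.2 * Z (1, p.2) ω)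
            = fun ω => A p.1 p.2 * (Z (0, p.1) ω * Z (1, p.2) ω) := by funext ω; ring
        rw [heq]
        exact (memℒp_prod p.1 p.2).const_mul _)
    have heq : (∑ p ∈ Finset.univ ×ˢ Finset.univ,
        fun ω => Z (0, p.1) ω * A p.1 p.2 * Z (1, p.2) ω)
        = fun ω => ∑ ν : Fin d, ∑ ν' : Fin d, Z (0, ν) ω * A ν ν' * Z (1, ν') ω := by
      funext ω
      rw [Finset.sum_apply, Finset.sum_product]
    rwa [heq] at h
  -- variance of U
  have hVarU : variance (fun ω => ∑ φ : Fin d, Z (0, φ) ω * Z (1, φ) ω) μ = d := by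
    rw [variance_eq_sub memU]
    have h1 : μ[(fun ω => ∑ φ : Fin d, Z (0, φ) ω * Z (1, φ) ω)]
        = ∫ ω, ∑ φ : Fin d, Z (0, φ) ω * Z (1, φ) ω ∂μ := rfl
    have h2 : μ[(fun ω => ∑ φ : Fin d, Z (0, φ) ω * Z (1, φ) ω) ^ 2]
        = ∫ ω, (∑ φ : Fin d, Z (0, φ) ω * Z (1, φ) ω) ^ 2 ∂μ := by
      congr 1
    rw [h1, h2, hEU]
    have hsq : (fun ω => (∑ φ : Fin d, Z (0, φ) ω * Z (1, φ) ω) ^ 2)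
        = fun ω => ∑ φ : Fin d, ∑ ψ : Fin d,
            (Z (0, φ) ω * Z (0, ψ) ω) * (Z (1, φ) ω * Z (1, ψ) ω) := by
      funext ω
      rw [sq, Finset.sum_mul_sum]
      refine Finset.sum_congr rfl fun φ _ => Finset.sum_congr rfl fun ψ _ => ?_
      ring
    calc (∫ ω, (∑ φ : Fin d, Z (0, φ) ω * Z (1, φ) ω) ^ 2 ∂μ) - 0 ^ 2
        = ∫ ω, ∑ φ : Fin d, ∑ ψ : Fin d,
            (Z (0, φ) ω * Z (0, ψ) ω) * (Z (1, φ) ω * Z (1, ψ) ω) ∂μ := by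
          rw [hsq]; ring
      _ = ∑ φ : Fin d, ∑ ψ : Fin d, ((if φ = ψ then (1:ℝ) else 0) * (if φ = ψ then 1 else 0)) := by
          rw [integral_finset_sum _ (fun φ _ =>
            integrable_finset_sum _ (fun ψ _ => cross4_int φ ψ φ ψ))]
          refine Finset.sum_congr rfl fun φ _ => ?_
          rw [integral_finset_sum _ (fun ψ _ => cross4_int φ ψ φ ψ)]
          exact Finset.sum_congr rfl fun ψ _ => cross4_E φ ψ φ ψ
      _ = (d : ℝ) := by simp
  -- variance of V
  have hVarV : variance (fun ω => ∑ ν : Fin d, ∑ ν' : Fin d,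
      Z (0, ν) ω * A ν ν' * Z (1, ν') ω) μ = ∑ ν : Fin d, ∑ ν' : Fin d, (A ν ν') ^ 2 := by
    rw [variance_eq_sub memV]
    have h1 : μ[(fun ω => ∑ ν : Fin d, ∑ ν' : Fin d, Z (0, ν) ω * A ν ν' * Z (1, ν') ω)]
        = ∫ ω, ∑ ν : Fin d, ∑ ν' : Fin d, Z (0, ν) ω * A ν ν' * Z (1, ν') ω ∂μ := rfl
    have h2 : μ[(fun ω => ∑ ν : Fin d, ∑ ν' : Fin d, Z (0, ν) ω * A ν ν' * Z (1, ν') ω) ^ 2]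
        = ∫ ω, (∑ ν : Fin d, ∑ ν' : Fin d, Z (0, ν) ω * A ν ν' * Z (1, ν') ω) ^ 2 ∂μ := by
      congr 1
    rw [h1, h2, hEV]
    have hsq : (fun ω => (∑ ν : Fin d, ∑ ν' : Fin d, Z (0, ν) ω * A ν ν' * Z (1, ν') ω) ^ 2)
        = fun ω => ∑ ν : Fin d, ∑ m : Fin d, ∑ ν' : Fin d, ∑ m' : Fin d,
            (A ν ν' * A m m') * ((Z (0, ν) ω * Z (0, m) ω) * (Z (1, ν') ω * Z (1, m') ω)) := by
      funext ω
      rw [sq, Finset.sum_mul_sum]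
      refine Finset.sum_congr rfl fun ν _ => Finset.sum_congr rfl fun m _ => ?_
      rw [Finset.sum_mul_sum]
      refine Finset.sum_congr rfl fun ν' _ => Finset.sum_congr rfl fun m' _ => ?_
      ring
    have hterm : ∀ ν m ν' m' : Fin d,
        (∫ ω, (A ν ν' * A m m') * ((Z (0, ν) ω * Z (0, m) ω) * (Z (1, ν') ω * Z (1, m') ω)) ∂μ)
        = (A ν ν' * A m m') * ((if ν = m then (1:ℝ) else 0) * (if ν' = m' then 1 else 0)) := by
      intro ν m ν' m'
      rw [integral_const_mul, cross4_E]
    calc (∫ ω, (∑ ν : Fin d, ∑ ν' : Fin d, Z (0, ν) ω * A ν ν' * Z (1, ν') ω) ^ 2 ∂μ) - 0 ^ 2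
        = ∫ ω, ∑ ν : Fin d, ∑ m : Fin d, ∑ ν' : Fin d, ∑ m' : Fin d,
            (A ν ν' * A m m') * ((Z (0, ν) ω * Z (0, m) ω) * (Z (1, ν') ω * Z (1, m') ω)) ∂μ := by
          rw [hsq]; ring
      _ = ∑ ν : Fin d, ∑ m : Fin d, ∑ ν' : Fin d, ∑ m' : Fin d,
            (A ν ν' * A m m') * ((if ν = m then (1:ℝ) else 0) * (if ν' = m' then 1 else 0)) := by
          rw [integral_finset_sum _ (fun ν _ => integrable_finset_sum _ (fun m _ =>
            integrable_finset_sum _ (fun ν' _ => integrable_finset_sum _ (fun m' _ =>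
              (cross4_int ν m ν' m').const_mul _))))]
          refine Finset.sum_congr rfl fun ν _ => ?_
          rw [integral_finset_sum _ (fun m _ =>
            integrable_finset_sum _ (fun ν' _ => integrable_finset_sum _ (fun m' _ =>
              (cross4_int ν m ν' m').const_mul _)))]
          refine Finset.sum_congr rfl fun m _ => ?_
          rw [integral_finset_sum _ (fun ν' _ => integrable_finset_sum _ (fun m' _ =>
              (cross4_int ν m ν' m').const_mul _))]
          refine Finset.sum_congr rfl fun ν' _ => ?_
          rw [integral_finset_sum _ (fun m' _ => (cross4_int ν m ν' m').const_mul _)]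
          exact Finset.sum_congr rfl fun m' _ => hterm ν m ν' m'
      _ = ∑ ν : Fin d, ∑ ν' : Fin d, (A ν ν') ^ 2 := by
          refine Finset.sum_congr rfl fun ν _ => ?_
          rw [Finset.sum_comm]
          refine Finset.sum_congr rfl fun ν' _ => ?_
          simp [mul_ite, sq]
  -- positivity facts
  obtain ⟨i0, j0, hij0⟩ : ∃ i j, M i j ≠ 0 := by
    by_contra h
    push_neg at h
    exact hM (by ext i j; simpa using h i j)
  have hAdiag : ∀ ν : Fin d, A ν ν = ∑ k : Fin e, M ν k * M ν k := by
    intro ν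
    rw [hA, Matrix.mul_apply]
    simp [Matrix.transpose_apply]
  have hAdiag_nonneg : ∀ ν : Fin d, 0 ≤ A ν ν := by
    intro ν
    rw [hAdiag]
    exact Finset.sum_nonneg fun k _ => mul_self_nonneg _
  have hAii : 0 < A i0 i0 := by
    rw [hAdiag]
    refine Finset.sum_pos' (fun k _ => mul_self_nonneg _) ⟨j0, Finset.mem_univ _, ?_⟩
    exact mul_self_pos.mpr hij0
  have htr : 0 < ∑ φ : Fin d, A φ φ :=
    Finset.sum_pos' (fun φ _ => hAdiag_nonneg φ) ⟨i0, Finset.mem_univ _, hAii⟩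
  have hd : 0 < d := i0.pos
  have hS : 0 < ∑ ν : Fin d, ∑ ν' : Fin d, (A ν ν') ^ 2 := by
    refine Finset.sum_pos' (fun ν _ => Finset.sum_nonneg fun ν' _ => sq_nonneg _)
      ⟨i0, Finset.mem_univ _, ?_⟩
    refine Finset.sum_pos' (fun ν' _ => sq_nonneg _) ⟨i0, Finset.mem_univ _, ?_⟩
    positivity
  -- assemble
  rw [hEUV, hEU, hEV, hVarU, hVarV]
  rw [zero_mul, sub_zero]
  apply div_pos htr
  apply Real.sqrt_pos.mpr
  apply mul_pos _ hS
  exact_mod_cast hd
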